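/- For positive integers m₁ and all real a, x: det(T_{2m₁}(-a, x, a) + a·B^{Cyl} + iλ·J_{2m₁}) = ∏_{j=1}^{m₁} (x² + 4a²·sin²((2j-1)π/(2m₁)) + λ²) for every real λ ≥ 0, where T_{2m₁}(-a,x,a) is the 2m₁×2m₁ tridiagonal Toeplitz matrix with diagonal x, subdiagonal -a, superdiagonal a; B^{Cyl} has (1,2m₁)-entry 1, (2m₁,1)-entry -1, and zeros elsewhere; and J_{2m₁} is the antidiagonal permutation matrix. -/

import Mathlib

open Matrix Complex

noncomputable def ww (m₁ : ℕ) (j : Fin (2 * m₁)) : ℂ :=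
  Complex.exp (Complex.I * ((2 * (j : ℕ) + 1) * Real.pi / (2 * m₁)))

def sg (m₁ : ℕ) (j : Fin (2 * m₁)) : Fin (2 * m₁) :=
  ⟨2 * m₁ - 1 - (j : ℕ), by have := j.isLt; omega⟩

lemma ww_mul (m₁ : ℕ) (j : Fin (2 * m₁)) : ww m₁ j * ww m₁ (sg m₁ j) = 1 := by
  have hj := j.isLt
  rw [ww, ww, ← Complex.exp_add]
  have hk : ((2 * ((sg m₁ j : ℕ)) + 1 : ℕ) : ℂ) = 4 * m₁ - (2 * (j:ℕ) + 1) := by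
    have h0 : (2 * ((sg m₁ j : ℕ)) + 1 : ℕ) + (2 * (j:ℕ) + 1) = 4 * m₁ := by
      simp only [sg]; omega
    have h1 := congrArg (fun t : ℕ => (t : ℂ)) h0
    push_cast at h1 ⊢
    linear_combination h1
  have hm : (m₁ : ℂ) ≠ 0 := Nat.cast_ne_zero.mpr (by omega)
  have harg : Complex.I * ((2 * (j:ℕ) + 1) * Real.pi / (2 * m₁))
      + Complex.I * ((2 * ((sg m₁ j : ℕ)) + 1) * Real.pi / (2 * m₁))
      = 2 * Real.pi * Complex.I := by
    have hk' : ((2 * ((sg m₁ j : ℕ)) + 1 : ℕ) : ℂ) = 4 * m₁ - (2 * (j:ℕ) + 1) := hk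
    push_cast at hk' ⊢
    rw [hk']
    field_simp
    ring
  rw [harg, Complex.exp_two_pi_mul_I]

lemma ww_pow (m₁ : ℕ) (hm : 0 < m₁) (j : Fin (2 * m₁)) : ww m₁ j ^ (2 * m₁) = -1 := by
  rw [ww, ← Complex.exp_nat_mul]
  have hm' : (m₁ : ℂ) ≠ 0 := Nat.cast_ne_zero.mpr (by omega)
  have : ((2 * m₁ : ℕ) : ℂ) * (Complex.I * ((2 * (j : ℕ) + 1) * Real.pi / (2 * m₁)))
      = ((2 * (j:ℕ) + 1 : ℕ) : ℂ) * (↑Real.pi * Complex.I) := by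
    push_cast
    field_simp
  rw [this, Complex.exp_nat_mul, Complex.exp_pi_mul_I]
  exact Odd.neg_one_pow ⟨(j:ℕ), by omega⟩

lemma ww_inj (m₁ : ℕ) (hm : 0 < m₁) : Function.Injective (ww m₁) := by
  intro j k h
  rw [ww, ww, Complex.exp_eq_exp_iff_exists_int] at h
  obtain ⟨N, hN⟩ := h
  have hpi : (Real.pi : ℂ) ≠ 0 := by exact_mod_cast Real.pi_ne_zero
  have hm' : (m₁ : ℂ) ≠ 0 := Nat.cast_ne_zero.mpr (by omega)
  have hI : Complex.I ≠ 0 := Complex.I_ne_zero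
  have key : ((j : ℕ) : ℂ) = (k : ℕ) + 2 * m₁ * N := by
    field_simp at hN
    have h2 : ((2 * (j:ℕ) + 1 : ℂ)) = (2 * (k:ℕ) + 1) + N * (2 * (2 * m₁)) := by
      apply mul_left_cancel₀ hI
      apply mul_right_cancel₀ hpi
      ring_nf
      ring_nf at hN
      linear_combination (Complex.I * (Real.pi : ℂ)) * hN
    linear_combination h2 / 2
  have keyz : ((j : ℕ) : ℤ) = (k : ℕ) + 2 * m₁ * N := by exact_mod_cast key
  have hj := j.isLt; have hk := k.isLt
  have hN0 : N = 0 := by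
    rcases lt_trichotomy N 0 with h | h | h
    · nlinarith [keyz]
    · exact h
    · nlinarith [keyz]
  subst hN0
  simp at keyz
  exact Fin.ext (by exact_mod_cast keyz)

noncomputable def ddC (m₁ : ℕ) (a x : ℝ) (j : Fin (2 * m₁)) : ℂ :=
  (x : ℂ) + a * ww m₁ j - a * ww m₁ (sg m₁ j)

noncomputable def eeC (m₁ : ℕ) (l : ℝ) (j : Fin (2 * m₁)) : ℂ :=
  -(Complex.I * l) * ww m₁ (sg m₁ j)

noncomputable def Dm (m₁ : ℕ) (a x l : ℝ) : Matrix (Fin (2 * m₁)) (Fin (2 * m₁)) ℂ :=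
  Matrix.of fun k j =>
    if k = j then ddC m₁ a x j else if k = sg m₁ j then eeC m₁ l j else 0

noncomputable def Pm (m₁ : ℕ) : Matrix (Fin (2 * m₁)) (Fin (2 * m₁)) ℂ :=
  Matrix.of fun p j => ww m₁ j ^ (p : ℕ)

lemma Pm_det_ne_zero (m₁ : ℕ) (hm : 0 < m₁) : (Pm m₁).det ≠ 0 := by
  have hPm : Pm m₁ = (Matrix.vandermonde (ww m₁)).transpose := by
    ext p j; simp [Pm, Matrix.vandermonde, Matrix.transpose_apply]
  rw [hPm, Matrix.det_transpose, Matrix.det_vandermonde]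
  apply Finset.prod_ne_zero_iff.mpr
  intro i _
  apply Finset.prod_ne_zero_iff.mpr
  intro j hj
  have hij : i ≠ j := by
    intro h; subst h; simp [Finset.mem_Ioi] at hj
  exact sub_ne_zero.mpr fun h => hij (ww_inj m₁ hm h.symm)

def gEq (m₁ : ℕ) : Fin 2 × Fin m₁ ≃ Fin (2 * m₁) where
  toFun := fun ij => if (ij.1 : ℕ) = 0 then ⟨ij.2, by have := ij.2.isLt; omega⟩
    else ⟨2 * m₁ - 1 - (ij.2 : ℕ), by have := ij.2.isLt; omega⟩
  invFun := fun k => if h : (k : ℕ) < m₁ then (0, ⟨k, h⟩)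
    else (1, ⟨2 * m₁ - 1 - (k : ℕ), by have := k.isLt; omega⟩)
  left_inv := by
    rintro ⟨i, j⟩
    have hj := j.isLt
    fin_cases i
    · simp
    · dsimp only
      simp only [Fin.isValue, Fin.val_one, one_ne_zero, if_neg, if_false]
      rw [dif_neg (by simp; omega)]
      refine Prod.ext rfl (Fin.ext ?_)
      simp; omega
  right_inv := by
    intro k
    have hk := k.isLt
    dsimp only
    by_cases h : (k : ℕ) < m₁
    · rw [dif_pos h]; simp
    · rw [dif_neg h]
      simp only [Fin.isValue, Fin.val_one, one_ne_zero, if_neg, if_false]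
      apply Fin.ext; simp; omega

noncomputable def bBlk (m₁ : ℕ) (a x l : ℝ) (j : Fin m₁) :
    Matrix (Fin 2) (Fin 2) ℂ :=
  Matrix.of fun i i' =>
    if i = i' then ddC m₁ a x (gEq m₁ (i, j)) else eeC m₁ l (gEq m₁ (i', j))

lemma Dm_submatrix (m₁ : ℕ) (a x l : ℝ) :
    (Dm m₁ a x l).submatrix (gEq m₁) (gEq m₁)
      = Matrix.blockDiagonal (fun j => bBlk m₁ a x l j) := by
  ext ⟨i, j⟩ ⟨i', j'⟩
  have hj := j.isLt; have hj' := j'.isLt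
  rcases i with ⟨iv, hi⟩; rcases i' with ⟨iv', hi'⟩
  rw [Matrix.submatrix_apply, Matrix.blockDiagonal_apply]
  simp only [Dm, bBlk, Matrix.of_apply, gEq, sg, Equiv.coe_fn_mk, Fin.mk.injEq, Fin.ext_iff]
  interval_cases iv <;> interval_cases iv' <;>
    simp only [Nat.zero_ne_one, Nat.one_ne_zero, if_true, if_false, ite_true, ite_false,
      reduceIte] <;>
    split_ifs <;>
    first
      | rfl
      | omega
      | (congr 1 <;> apply Fin.ext <;> simp <;> omega)

lemma blk_det (m₁ : ℕ) (a x l : ℝ) (j : Fin m₁) :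
    (bBlk m₁ a x l j).det
      = ((x ^ 2 + 4 * a ^ 2 * Real.sin ((2 * (j:ℕ) + 1) * Real.pi / (2 * m₁)) ^ 2
          + l ^ 2 : ℝ) : ℂ) := by
  have hj := j.isLt
  set j₀ : Fin (2 * m₁) := gEq m₁ (0, j) with hj₀
  set j₁ : Fin (2 * m₁) := gEq m₁ (1, j) with hj₁
  have hv0 : (j₀ : ℕ) = (j : ℕ) := by simp [hj₀, gEq]
  have hv1 : (j₁ : ℕ) = 2 * m₁ - 1 - (j : ℕ) := by simp [hj₁, gEq]
  have hs0 : sg m₁ j₀ = j₁ := by apply Fin.ext; simp [sg, hv0, hv1]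
  have hs1 : sg m₁ j₁ = j₀ := by apply Fin.ext; simp [sg, hv0, hv1]; omega
  rw [Matrix.det_fin_two]
  have e00 : bBlk m₁ a x l j 0 0 = ddC m₁ a x j₀ := by simp [bBlk]; rfl
  have e11 : bBlk m₁ a x l j 1 1 = ddC m₁ a x j₁ := by simp [bBlk]; rfl
  have e01 : bBlk m₁ a x l j 0 1 = eeC m₁ l j₁ := by
    simp [bBlk, show (0 : Fin 2) ≠ 1 by decide]; rfl
  have e10 : bBlk m₁ a x l j 1 0 = eeC m₁ l j₀ := by
    simp [bBlk, show (1 : Fin 2) ≠ 0 by decide]; rfl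
  rw [e00, e11, e01, e10]
  set r : ℝ := (2 * (j:ℕ) + 1) * Real.pi / (2 * m₁) with hr
  set c : ℂ := ww m₁ j₀ with hc
  set w : ℂ := ww m₁ j₁ with hw
  have hcw : c * w = 1 := by
    have := ww_mul m₁ j₀; rwa [hs0] at this
  have hcr : c = Complex.exp ((r : ℂ) * Complex.I) := by
    rw [hc, ww, hv0]
    congr 1
    rw [hr]
    push_cast
    ring
  have hwr : w = Complex.exp (-((r : ℂ) * Complex.I)) := by
    have h1 : c⁻¹ = w := inv_eq_of_mul_eq_one_right hcw
    rw [← h1, hcr, ← Complex.exp_neg]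
  set s : ℂ := Complex.sin (r : ℂ) with hs
  have hsin : c - w = 2 * Complex.I * s := by
    have hdef : s = (Complex.exp (-((r:ℂ) * Complex.I))
        - Complex.exp ((r:ℂ) * Complex.I)) * Complex.I / 2 := by
      rw [hs, Complex.sin, neg_mul]
    rw [hcr, hwr, hdef]
    have := Complex.I_sq
    linear_combination (Complex.exp ((r:ℂ) * Complex.I)
        - Complex.exp (-((r:ℂ) * Complex.I))) * this
  have hrhs : ((x ^ 2 + 4 * a ^ 2 * Real.sin r ^ 2 + l ^ 2 : ℝ) : ℂ)
      = (x:ℂ)^2 + 4*(a:ℂ)^2*s^2 + (l:ℂ)^2 := by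
    rw [hs]
    push_cast [Complex.ofReal_sin]
    ring
  rw [ddC, ddC, eeC, eeC, hs0, hs1, ← hc, ← hw, hrhs]
  linear_combination (-(a:ℂ)^2*((c-w) + 2*Complex.I*s)) * hsin + ((l:ℂ)^2) * hcw
    + (-4*(a:ℂ)^2*s^2 - (l:ℂ)^2*(c*w)) * Complex.I_sq

lemma det_Dm (m₁ : ℕ) (a x l : ℝ) :
    (Dm m₁ a x l).det = ∏ j : Fin m₁,
      ((x ^ 2 + 4 * a ^ 2 * Real.sin ((2 * (j:ℕ) + 1) * Real.pi / (2 * m₁)) ^ 2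
          + l ^ 2 : ℝ) : ℂ) := by
  rw [← Matrix.det_submatrix_equiv_self (gEq m₁) (Dm m₁ a x l), Dm_submatrix,
    Matrix.det_blockDiagonal]
  exact Finset.prod_congr rfl fun j _ => blk_det m₁ a x l j

lemma sum_delta {n : ℕ} (f : Fin n → ℂ) (P : Fin n → Prop) [DecidablePred P] (q₀ : Fin n)
    (hq : ∀ q, P q ↔ q = q₀) :
    (∑ q, if P q then f q else 0) = f q₀ := by
  rw [Finset.sum_congr rfl fun q _ => if_congr (hq q) rfl rfl]
  simp

lemma sum_delta_zero {n : ℕ} (f : Fin n → ℂ) (P : Fin n → Prop) [DecidablePred P]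
    (hq : ∀ q, ¬ P q) :
    (∑ q, if P q then f q else 0) = 0 := by
  rw [Finset.sum_congr rfl fun q _ => if_neg (hq q)]
  simp

noncomputable def Tdef (m₁ : ℕ) (a x : ℝ) : Matrix (Fin (2*m₁)) (Fin (2*m₁)) ℂ :=
  Matrix.of fun p q : Fin (2 * m₁) =>
    if p = q then (x : ℂ)
    else if (p : ℕ) + 1 = (q : ℕ) then (a : ℂ)
    else if (q : ℕ) + 1 = (p : ℕ) then -(a : ℂ)
    else 0

noncomputable def Bdef (m₁ : ℕ) : Matrix (Fin (2*m₁)) (Fin (2*m₁)) ℂ :=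
  Matrix.of fun p q : Fin (2 * m₁) =>
    if (p : ℕ) = 0 ∧ (q : ℕ) + 1 = 2 * m₁ then (1 : ℂ)
    else if (p : ℕ) + 1 = 2 * m₁ ∧ (q : ℕ) = 0 then -1
    else 0

noncomputable def Jdef (m₁ : ℕ) : Matrix (Fin (2*m₁)) (Fin (2*m₁)) ℂ :=
  Matrix.of fun p q : Fin (2 * m₁) =>
    if (p : ℕ) + (q : ℕ) + 2 = 2 * m₁ + 1 then (1 : ℂ) else 0

lemma mul_Pm (m₁ : ℕ) (hm : 0 < m₁) (a x l : ℝ) :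
    (Tdef m₁ a x + (a:ℂ) • Bdef m₁ + (Complex.I * l) • Jdef m₁) * Pm m₁
      = Pm m₁ * Dm m₁ a x l := by
  ext p j
  have hp := p.isLt; have hj := j.isLt
  set c : ℂ := ww m₁ j with hc
  set w : ℂ := ww m₁ (sg m₁ j) with hw
  have hcw : c * w = 1 := ww_mul m₁ j
  have hcn : c ^ (2 * m₁) = -1 := ww_pow m₁ hm j
  -- RHS
  have hnsg : j ≠ sg m₁ j := by
    intro h; have := congrArg Fin.val h; simp [sg] at this; omega
  have hRHS : (Pm m₁ * Dm m₁ a x l) p j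
      = c ^ (p:ℕ) * ((x:ℂ) + a * c - a * w) + w ^ (p:ℕ) * (-(Complex.I * l) * w) := by
    rw [Matrix.mul_apply]
    have hsum : ∀ k, Pm m₁ p k * Dm m₁ a x l k j
        = (if k = j then c ^ (p:ℕ) * ((x:ℂ) + a * c - a * w) else 0)
          + (if k = sg m₁ j then w ^ (p:ℕ) * (-(Complex.I * l) * w) else 0) := by
      intro k
      by_cases h1 : k = j
      · subst h1
        rw [if_pos rfl, if_neg hnsg]
        simp only [Pm, Dm, Matrix.of_apply, ddC, ← hc, ← hw, eq_self_iff_true, if_true, ite_true]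
        ring
      · rw [if_neg h1]
        by_cases h2 : k = sg m₁ j
        · subst h2
          rw [if_pos rfl]
          simp only [Pm, Dm, Matrix.of_apply, if_neg h1, eeC, ← hw, if_true, eq_self_iff_true]
          ring
        · rw [if_neg h2]
          simp only [Pm, Dm, Matrix.of_apply, if_neg h1, if_neg h2]
          ring
    rw [Finset.sum_congr rfl fun k _ => hsum k, Finset.sum_add_distrib]
    simp
  rw [hRHS, Matrix.mul_apply]
  -- LHS summand decomposition
  have hsplit : ∀ q : Fin (2*m₁),
      (Tdef m₁ a x + (a:ℂ) • Bdef m₁ + (Complex.I * l) • Jdef m₁) p q * ww m₁ j ^ (q:ℕ)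
      = (if (p:ℕ) = (q:ℕ) then (x:ℂ) * c ^ (q:ℕ) else 0)
      + (if (p:ℕ)+1 = (q:ℕ) then (a:ℂ) * c ^ (q:ℕ) else 0)
      + (if (q:ℕ)+1 = (p:ℕ) then -(a:ℂ) * c ^ (q:ℕ) else 0)
      + (if (p:ℕ) = 0 ∧ (q:ℕ)+1 = 2*m₁ then (a:ℂ) * c ^ (q:ℕ) else 0)
      + (if (p:ℕ)+1 = 2*m₁ ∧ (q:ℕ) = 0 then -(a:ℂ) * c ^ (q:ℕ) else 0)
      + (if (p:ℕ)+(q:ℕ)+2 = 2*m₁+1 then (Complex.I * l) * c ^ (q:ℕ) else 0) := by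
    intro q
    have hq := q.isLt
    simp only [Matrix.add_apply, Matrix.smul_apply, smul_eq_mul, Tdef, Bdef, Jdef,
      Matrix.of_apply, Fin.ext_iff, ← hc]
    split_ifs <;> first | ring1 | (exfalso; omega)
  simp only [Pm, Matrix.of_apply]
  rw [Finset.sum_congr rfl fun q _ => hsplit q]
  rw [Finset.sum_add_distrib, Finset.sum_add_distrib, Finset.sum_add_distrib,
    Finset.sum_add_distrib, Finset.sum_add_distrib]
  -- now evaluate the six sums in the three cases for p
  rcases show (p:ℕ) = 0 ∨ (p:ℕ) = 2*m₁-1 ∨ (0 < (p:ℕ) ∧ (p:ℕ) < 2*m₁-1) from by omega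
    with hp0 | hpn | ⟨hp1, hp2⟩
  · -- p = 0
    rw [sum_delta _ _ p (fun q => by rw [Fin.ext_iff]; omega)]
    rw [sum_delta _ _ (⟨(p:ℕ)+1, by omega⟩ : Fin (2*m₁)) (fun q => by rw [Fin.ext_iff]; simp; omega)]
    rw [sum_delta_zero _ _ (fun q => by omega)]
    rw [sum_delta _ _ (⟨2*m₁-1, by omega⟩ : Fin (2*m₁)) (fun q => by rw [Fin.ext_iff]; simp; omega)]
    rw [sum_delta_zero _ _ (fun q => by omega)]
    rw [sum_delta _ _ (⟨2*m₁-1-(p:ℕ), by omega⟩ : Fin (2*m₁)) (fun q => by rw [Fin.ext_iff]; simp; omega)]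
    simp only [Fin.val_mk, hp0]
    obtain ⟨k, hk⟩ : ∃ k, 2*m₁ = k + 1 := ⟨2*m₁-1, by omega⟩
    rw [show (2*m₁-1 : ℕ) = k from by omega]
    simp only [Nat.sub_zero]
    have hC : c ^ k * c = -1 := by
      rw [← pow_succ, ← hk]; exact hcn
    have hE : c ^ k = -w := by linear_combination w * hC + (-(c^k)) * hcw
    linear_combination ((a:ℂ) + Complex.I * l) * hE
  · -- p = 2m₁ - 1
    rw [sum_delta _ _ p (fun q => by rw [Fin.ext_iff]; omega)]
    rw [sum_delta_zero _ _ (fun q => by have := q.isLt; omega)]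
    rw [sum_delta _ _ (⟨(p:ℕ)-1, by omega⟩ : Fin (2*m₁)) (fun q => by rw [Fin.ext_iff]; simp; omega)]
    rw [sum_delta_zero _ _ (fun q => by omega)]
    rw [sum_delta _ _ (⟨0, by omega⟩ : Fin (2*m₁)) (fun q => by rw [Fin.ext_iff]; simp; omega)]
    rw [sum_delta _ _ (⟨2*m₁-1-(p:ℕ), by omega⟩ : Fin (2*m₁)) (fun q => by rw [Fin.ext_iff]; simp; omega)]
    simp only [Fin.val_mk]
    obtain ⟨k, hk⟩ : ∃ k, 2*m₁ = k + 2 := ⟨2*m₁-2, by omega⟩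
    rw [show (p:ℕ) = k+1 from by omega]
    rw [show (k+1-1 : ℕ) = k from by omega,
      show (2*m₁-1-(k+1) : ℕ) = 0 from by omega]
    have hcn' : c ^ (k+2) = -1 := by rw [← hk]; exact hcn
    have hD : c ^ (k+2) * w ^ (k+2) = 1 := by
      rw [← mul_pow, hcw, one_pow]
    have hwn : w ^ (k+2) = -1 := by
      linear_combination (w^(k+2)) * hcn' + (-1 : ℂ) * hD
    linear_combination ((a:ℂ) * c^k) * hcw + (-(a:ℂ)) * hcn' + (Complex.I * l) * hwn
  · -- middle
    rw [sum_delta _ _ p (fun q => by rw [Fin.ext_iff]; omega)]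
    rw [sum_delta _ _ (⟨(p:ℕ)+1, by omega⟩ : Fin (2*m₁)) (fun q => by rw [Fin.ext_iff]; simp; omega)]
    rw [sum_delta _ _ (⟨(p:ℕ)-1, by omega⟩ : Fin (2*m₁)) (fun q => by rw [Fin.ext_iff]; simp; omega)]
    rw [sum_delta_zero _ _ (fun q => by omega)]
    rw [sum_delta_zero _ _ (fun q => by omega)]
    rw [sum_delta _ _ (⟨2*m₁-1-(p:ℕ), by omega⟩ : Fin (2*m₁)) (fun q => by rw [Fin.ext_iff]; simp; omega)]
    simp only [Fin.val_mk]
    obtain ⟨p', hp'⟩ : ∃ p', (p:ℕ) = p' + 1 := ⟨(p:ℕ)-1, by omega⟩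
    obtain ⟨k, hk⟩ : ∃ k, k + (p' + 2) = 2*m₁ := ⟨2*m₁-(p'+2), by omega⟩
    rw [show (p:ℕ) = p'+1 from hp', show (p'+1-1 : ℕ) = p' from by omega,
      show (2*m₁-1-(p'+1) : ℕ) = k from by omega]
    have hC : c ^ k * c ^ (p'+2) = -1 := by
      rw [← pow_add, hk]; exact hcn
    have hD : c ^ (p'+2) * w ^ (p'+2) = 1 := by
      rw [← mul_pow, hcw, one_pow]
    linear_combination ((a:ℂ) * c^p') * hcw + (Complex.I * l * w^(p'+2)) * hC
      + (-(Complex.I * l) * c^k) * hD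


theorem det_cyl_cruciform (m₁ : ℕ) (hm : 0 < m₁) (a x l : ℝ) (hl : 0 ≤ l)
    (T B J : Matrix (Fin (2 * m₁)) (Fin (2 * m₁)) ℂ)
    (hT : T = Matrix.of fun p q : Fin (2 * m₁) =>
      if p = q then (x : ℂ)
      else if (p : ℕ) + 1 = (q : ℕ) then (a : ℂ)
      else if (q : ℕ) + 1 = (p : ℕ) then -(a : ℂ)
      else 0)
    (hB : B = Matrix.of fun p q : Fin (2 * m₁) =>
      if (p : ℕ) = 0 ∧ (q : ℕ) + 1 = 2 * m₁ then (1 : ℂ)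
      else if (p : ℕ) + 1 = 2 * m₁ ∧ (q : ℕ) = 0 then -1
      else 0)
    (hJ : J = Matrix.of fun p q : Fin (2 * m₁) =>
      if (p : ℕ) + (q : ℕ) + 2 = 2 * m₁ + 1 then (1 : ℂ) else 0) :
    (T + (a : ℂ) • B + (Complex.I * l) • J).det
      = ∏ j : Fin m₁,
        ((x ^ 2 + 4 * a ^ 2 * Real.sin ((2 * ((j : ℕ) + 1) - 1 : ℕ) * Real.pi / (2 * m₁)) ^ 2
            + l ^ 2 : ℝ) : ℂ) := by
  have hT' : T = Tdef m₁ a x := hT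
  have hB' : B = Bdef m₁ := hB
  have hJ' : J = Jdef m₁ := hJ
  subst hT' hB' hJ'
  have key := mul_Pm m₁ hm a x l
  have h1 : (Tdef m₁ a x + (a:ℂ) • Bdef m₁ + (Complex.I * l) • Jdef m₁).det * (Pm m₁).det
      = (Pm m₁).det * (Dm m₁ a x l).det := by
    rw [← Matrix.det_mul, key, Matrix.det_mul]
  have hP := Pm_det_ne_zero m₁ hm
  rw [mul_comm ((Pm m₁).det)] at h1
  have h2 := mul_right_cancel₀ hP h1
  rw [h2, det_Dm]
  refine Finset.prod_congr rfl fun j _ => ?_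
  have hang : ((2 * ((j:ℕ) + 1) - 1 : ℕ) : ℝ) = 2 * (j:ℕ) + 1 := by
    rw [show (2 * ((j:ℕ) + 1) - 1 : ℕ) = 2 * (j:ℕ) + 1 from by omega]
    push_cast
    ring
  rw [hang]
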